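/- Let n ≥ 1 and let ρ = ρ₁ ⊗ ⋯ ⊗ ρₙ and σ = σ₁ ⊗ ⋯ ⊗ σₙ be n-qubit product states, where each ρᵢ, σᵢ is a 2×2 positive semidefinite complex matrix with trace 1 and ⊗ is the Kronecker product. For θ ∈ [0,π], φ ∈ [0,2π] let E(θ,φ) := v(θ,φ) v(θ,φ)* with v(θ,φ) := cos(θ/2)·e₀ + e^{iφ} sin(θ/2)·e₁ (e₀, e₁ the standard basis of ℂ²), and for i ∈ {1,…,n} let Eᵢ(θ,φ) := I₂^{⊗(i−1)} ⊗ E(θ,φ) ⊗ I₂^{⊗(n−i)}. Then (1/n) · Σ_{i=1}^n (1/(4π)) ∫_{0}^{2π} ∫_{0}^{π} (2·Re tr(Eᵢ(θ,φ)·ρ) − 2·Re tr(Eᵢ(θ,φ)·σ))² sin θ dθ dφ = (2/(3n)) · Σ_{i=1}^n Re tr((ρᵢ − σᵢ)²). Equivalently, the expected squared loss between f_ρ and f_σ under the distribution that picks a uniformly random qubit and measures it with a Haar-random single-qubit projector equals (4/(3n)) Σᵢ ‖ρᵢ − σᵢ‖²_tr, since for 2×2 Hermitian matrices of equal trace the squared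 trace distance ‖ρᵢ − σᵢ‖²_tr equals Re tr((ρᵢ − σᵢ)²)/2. -/

import Mathlib

open Matrix ComplexOrder

noncomputable section

/-- The single-qubit pure state `cos(θ/2)·e₀ + e^{iφ}·sin(θ/2)·e₁` in spherical coordinates
(with `e₀, e₁` the standard basis of `ℂ²`). -/
def blochVec (θ φ : ℝ) : Fin 2 → ℂ :=
  ![(Real.cos (θ / 2) : ℂ), Complex.exp (φ * Complex.I) * (Real.sin (θ / 2) : ℂ)]

/-- The Haar-random single-qubit projective measurement `E(θ,φ) = v(θ,φ) v(θ,φ)*`. -/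
def haarMeas (θ φ : ℝ) : Matrix (Fin 2) (Fin 2) ℂ :=
  Matrix.vecMulVec (blochVec θ φ) (star (blochVec θ φ))

/-- The `n`-qubit product state `τ₁ ⊗ ⋯ ⊗ τₙ` as a matrix indexed by bit strings. -/
def prodState {n : ℕ} (τ : Fin n → Matrix (Fin 2) (Fin 2) ℂ) :
    Matrix (Fin n → Fin 2) (Fin n → Fin 2) ℂ :=
  Matrix.of fun z w => ∏ i, τ i (z i) (w i)

/-- The measurement `I₂^{⊗(i−1)} ⊗ E(θ,φ) ⊗ I₂^{⊗(n−i)}` acting on qubit `i` only. -/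
def qubitMeas {n : ℕ} (i : Fin n) (θ φ : ℝ) :
    Matrix (Fin n → Fin 2) (Fin n → Fin 2) ℂ :=
  prodState fun j => if j = i then haarMeas θ φ else 1

/-- Trace of a product of two product states factors. -/
lemma trace_prodState_mul {n : ℕ} (α β : Fin n → Matrix (Fin 2) (Fin 2) ℂ) :
    (prodState α * prodState β).trace = ∏ j, (α j * β j).trace := by
  classical
  simp only [Matrix.trace, Matrix.diag, Matrix.mul_apply, prodState, Matrix.of_apply]
  have h1 : ∀ z : Fin n → Fin 2,
      (∑ w : Fin n → Fin 2, (∏ j, α j (z j) (w j)) * ∏ j, β j (w j) (z j))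
        = ∏ j, ∑ y, α j (z j) y * β j y (z j) := by
    intro z
    rw [Finset.prod_univ_sum, Fintype.piFinset_univ]
    exact Finset.sum_congr rfl fun w _ => (Finset.prod_mul_distrib).symm
  simp only [h1]
  rw [Finset.prod_univ_sum, Fintype.piFinset_univ]

lemma trace_qubitMeas {n : ℕ} (i : Fin n) (θ φ : ℝ)
    (τ : Fin n → Matrix (Fin 2) (Fin 2) ℂ) (htr : ∀ j, (τ j).trace = 1) :
    (qubitMeas i θ φ * prodState τ).trace = (haarMeas θ φ * τ i).trace := by
  classical
  rw [qubitMeas, trace_prodState_mul]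
  rw [Finset.prod_eq_single i (fun j _ hj => by simp [hj, htr j]) (by simp)]
  simp

lemma haar_trace_re (θ φ : ℝ) (M : Matrix (Fin 2) (Fin 2) ℂ)
    (hM : M.IsHermitian) (htr : M.trace = 0) :
    (haarMeas θ φ * M).trace.re =
      (M 0 0).re * Real.cos θ +
        Real.sin θ * ((M 0 1).re * Real.cos φ - (M 0 1).im * Real.sin φ) := by
  have h10 : M 1 0 = star (M 0 1) := (hM.apply 1 0).symm
  have h11 : M 1 1 = - M 0 0 := by
    rw [Matrix.trace_fin_two] at htr; linear_combination htr
  have h00 : (M 0 0).im = 0 := by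
    have h := (hM.apply 0 0).symm
    have : (M 0 0).im = -(M 0 0).im := by
      simpa [Complex.ext_iff, RCLike.star_def, Complex.conj_re, Complex.conj_im] using h
    linarith
  have hexp : Complex.exp (↑φ * Complex.I) =
      Complex.ofReal (Real.cos φ) + Complex.ofReal (Real.sin φ) * Complex.I := by
    rw [Complex.exp_mul_I, Complex.ofReal_cos, Complex.ofReal_sin]
  have hcos : Real.cos θ = Real.cos (θ/2)^2 - Real.sin (θ/2)^2 := by
    have h := Real.cos_two_mul' (θ/2); rw [show 2*(θ/2) = θ by ring] at h; exact h
  have hsin : Real.sin θ = 2 * Real.sin (θ/2) * Real.cos (θ/2) := by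
    have h := Real.sin_two_mul (θ/2); rw [show 2*(θ/2) = θ by ring] at h; exact h
  simp only [haarMeas, blochVec, Matrix.trace, Matrix.diag, Matrix.mul_apply,
    Fin.sum_univ_two, Matrix.vecMulVec_apply, Pi.star_apply, Matrix.cons_val_zero,
    Matrix.cons_val_one, Matrix.head_cons, hexp, h10, h11, RCLike.star_def, _root_.map_mul,
    map_add, Complex.conj_ofReal, Complex.conj_I]
  rw [hcos, hsin]
  simp only [Complex.add_re, Complex.mul_re, Complex.mul_im, Complex.sub_re, Complex.sub_im,
    Complex.add_im, Complex.neg_re, Complex.neg_im, Complex.ofReal_re, Complex.ofReal_im,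
    Complex.I_re, Complex.I_im, Complex.conj_re, Complex.conj_im, h00]
  ring_nf
  linear_combination (-(M 0 0).re * Real.sin (θ * (1/2)) ^ 2) * (Real.sin_sq_add_cos_sq φ)

lemma sq_trace_re (M : Matrix (Fin 2) (Fin 2) ℂ) (hM : M.IsHermitian) (htr : M.trace = 0) :
    (M * M).trace.re = 2 * (M 0 0).re ^ 2 + 2 * ((M 0 1).re ^ 2 + (M 0 1).im ^ 2) := by
  have h10 : M 1 0 = star (M 0 1) := (hM.apply 1 0).symm
  have h11 : M 1 1 = - M 0 0 := by
    rw [Matrix.trace_fin_two] at htr; linear_combination htr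
  have h00 : (M 0 0).im = 0 := by
    have h := (hM.apply 0 0).symm
    have : (M 0 0).im = -(M 0 0).im := by
      simpa [Complex.ext_iff, RCLike.star_def, Complex.conj_re, Complex.conj_im] using h
    linarith
  simp only [Matrix.trace, Matrix.diag, Matrix.mul_apply, Fin.sum_univ_two, h10, h11,
    RCLike.star_def]
  simp only [Complex.add_re, Complex.mul_re, Complex.mul_im, Complex.neg_re, Complex.neg_im,
    Complex.conj_re, Complex.conj_im, h00]
  ring

lemma inner_int (a g : ℝ) :
    ∫ θ in (0:ℝ)..Real.pi, (2 * (a * Real.cos θ + Real.sin θ * g)) ^ 2 * Real.sin θ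
      = 8/3 * a^2 + 16/3 * g^2 := by
  have key : ∀ θ ∈ Set.uIcc (0:ℝ) Real.pi,
      HasDerivAt (fun x => 4 * (-(a^2) * Real.cos x ^ 3 / 3 + 2*a*g * Real.sin x ^ 3 / 3
        + g^2 * (-Real.cos x + Real.cos x ^ 3 / 3)))
      ((2 * (a * Real.cos θ + Real.sin θ * g)) ^ 2 * Real.sin θ) θ := by
    intro θ _
    have hc := Real.hasDerivAt_cos θ
    have hs := Real.hasDerivAt_sin θ
    have h1 : HasDerivAt (fun x => Real.cos x ^ 3) (3 * Real.cos θ ^ 2 * (-Real.sin θ)) θ := by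
      simpa using hc.fun_pow 3
    have h2 : HasDerivAt (fun x => Real.sin x ^ 3) (3 * Real.sin θ ^ 2 * Real.cos θ) θ := by
      simpa using hs.fun_pow 3
    have ha : HasDerivAt (fun x => -(a^2) * Real.cos x ^ 3 / 3)
        (-(a^2) * (3 * Real.cos θ ^ 2 * (-Real.sin θ)) / 3) θ := (h1.const_mul _).div_const 3
    have hb : HasDerivAt (fun x => 2*a*g * Real.sin x ^ 3 / 3)
        (2*a*g * (3 * Real.sin θ ^ 2 * Real.cos θ) / 3) θ := (h2.const_mul _).div_const 3
    have hcc : HasDerivAt (fun x => g^2 * (-Real.cos x + Real.cos x ^ 3 / 3))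
        (g^2 * (-(-Real.sin θ) + (3 * Real.cos θ ^ 2 * (-Real.sin θ)) / 3)) θ :=
      (hc.neg.add (h1.div_const 3)).const_mul _
    have h := ((ha.add hb).add hcc).const_mul 4
    refine h.congr_deriv (Eq.symm ?_)
    linear_combination (4*g^2*Real.sin θ) * (Real.sin_sq_add_cos_sq θ)
  have hint : IntervalIntegrable
      (fun θ => (2 * (a * Real.cos θ + Real.sin θ * g)) ^ 2 * Real.sin θ)
      MeasureTheory.volume 0 Real.pi := by
    apply Continuous.intervalIntegrable; fun_prop
  rw [intervalIntegral.integral_eq_sub_of_hasDerivAt key hint]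
  simp [Real.cos_pi, Real.sin_pi]
  ring

lemma outer_int (a b d : ℝ) :
    ∫ φ in (0:ℝ)..(2*Real.pi), (8/3 * a^2 + 16/3 * (b * Real.cos φ - d * Real.sin φ)^2)
      = 16 * Real.pi / 3 * (a^2 + b^2 + d^2) := by
  have key : ∀ φ ∈ Set.uIcc (0:ℝ) (2*Real.pi),
      HasDerivAt (fun x => 8/3*a^2*x + 16/3 * (b^2 * (x/2 + Real.sin x * Real.cos x / 2)
        + d^2 * (x/2 - Real.sin x * Real.cos x / 2) - 2*b*d * (Real.sin x ^ 2 / 2)))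
      (8/3 * a^2 + 16/3 * (b * Real.cos φ - d * Real.sin φ)^2) φ := by
    intro φ _
    have hc := Real.hasDerivAt_cos φ
    have hs := Real.hasDerivAt_sin φ
    have hsc : HasDerivAt (fun x => Real.sin x * Real.cos x)
        (Real.cos φ * Real.cos φ + Real.sin φ * (-Real.sin φ)) φ := hs.mul hc
    have hs2 : HasDerivAt (fun x => Real.sin x ^ 2) (2 * Real.sin φ * Real.cos φ) φ := by
      simpa using hs.fun_pow 2
    have hb : HasDerivAt (fun x => b^2 * (x/2 + Real.sin x * Real.cos x / 2))
        (b^2 * (1/2 + (Real.cos φ * Real.cos φ + Real.sin φ * (-Real.sin φ))/2)) φ := by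
      have := (((hasDerivAt_id φ).div_const 2).add (hsc.div_const 2)).const_mul (b^2)
      simpa using this
    have hd : HasDerivAt (fun x => d^2 * (x/2 - Real.sin x * Real.cos x / 2))
        (d^2 * (1/2 - (Real.cos φ * Real.cos φ + Real.sin φ * (-Real.sin φ))/2)) φ := by
      have := (((hasDerivAt_id φ).div_const 2).sub (hsc.div_const 2)).const_mul (d^2)
      simpa using this
    have hbd : HasDerivAt (fun x => 2*b*d * (Real.sin x ^ 2 / 2))
        (2*b*d * ((2 * Real.sin φ * Real.cos φ)/2)) φ := (hs2.div_const 2).const_mul _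
    have hfirst : HasDerivAt (fun x : ℝ => 8/3*a^2*x) (8/3*a^2*1) φ := by
      simpa using (hasDerivAt_id φ).const_mul (8/3*a^2)
    have h := hfirst.add (((hb.add hd).sub hbd).const_mul (16/3))
    refine h.congr_deriv (Eq.symm ?_)
    linear_combination (8/3*(b^2+d^2)) * (Real.sin_sq_add_cos_sq φ)
  have hint : IntervalIntegrable
      (fun φ => 8/3 * a^2 + 16/3 * (b * Real.cos φ - d * Real.sin φ)^2)
      MeasureTheory.volume 0 (2*Real.pi) := by
    apply Continuous.intervalIntegrable; fun_prop
  rw [intervalIntegral.integral_eq_sub_of_hasDerivAt key hint]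
  simp [Real.sin_two_pi, Real.cos_two_pi]
  ring

/-- The expected squared loss between the p-concepts of two product states, under the
distribution that picks a uniformly random qubit and measures it with a Haar-random
single-qubit projector, equals `(4/(3n)) Σᵢ ‖ρᵢ − σᵢ‖²_tr = (2/(3n)) Σᵢ tr((ρᵢ − σᵢ)²)`. -/
theorem product_state_squared_loss {n : ℕ} (hn : 1 ≤ n)
    (ρ σ : Fin n → Matrix (Fin 2) (Fin 2) ℂ)
    (hρ : ∀ i, (ρ i).PosSemidef) (hρtr : ∀ i, (ρ i).trace = 1)
    (hσ : ∀ i, (σ i).PosSemidef) (hσtr : ∀ i, (σ i).trace = 1) :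
    (1 / n : ℝ) *
        ∑ i : Fin n, (1 / (4 * Real.pi)) *
          ∫ φ in (0 : ℝ)..(2 * Real.pi), ∫ θ in (0 : ℝ)..Real.pi,
            (2 * (qubitMeas i θ φ * prodState ρ).trace.re -
                2 * (qubitMeas i θ φ * prodState σ).trace.re) ^ 2 * Real.sin θ =
      (2 / (3 * n)) * ∑ i : Fin n, ((ρ i - σ i) * (ρ i - σ i)).trace.re := by
  have hπ : Real.pi ≠ 0 := Real.pi_ne_zero
  have hn' : (n : ℝ) ≠ 0 := Nat.cast_ne_zero.2 (by omega)
  have hherm : ∀ i, (ρ i - σ i).IsHermitian := fun i => (hρ i).1.sub (hσ i).1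
  have htr0 : ∀ i, (ρ i - σ i).trace = 0 := fun i => by
    rw [Matrix.trace_sub, hρtr, hσtr]; ring
  have hpt : ∀ (i : Fin n) (θ φ : ℝ),
      2 * (qubitMeas i θ φ * prodState ρ).trace.re -
        2 * (qubitMeas i θ φ * prodState σ).trace.re =
      2 * (((ρ i - σ i) 0 0).re * Real.cos θ + Real.sin θ *
        (((ρ i - σ i) 0 1).re * Real.cos φ - ((ρ i - σ i) 0 1).im * Real.sin φ)) := by
    intro i θ φ
    rw [trace_qubitMeas i θ φ ρ hρtr, trace_qubitMeas i θ φ σ hσtr]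
    have h := haar_trace_re θ φ (ρ i - σ i) (hherm i) (htr0 i)
    rw [Matrix.mul_sub, Matrix.trace_sub, Complex.sub_re] at h
    linarith
  simp only [hpt, inner_int, outer_int]
  have hsq : ∀ i, ((ρ i - σ i) * (ρ i - σ i)).trace.re =
      2 * ((ρ i - σ i) 0 0).re ^ 2 +
        2 * (((ρ i - σ i) 0 1).re ^ 2 + ((ρ i - σ i) 0 1).im ^ 2) :=
    fun i => sq_trace_re _ (hherm i) (htr0 i)
  simp only [hsq]
  rw [Finset.mul_sum, Finset.mul_sum]
  refine Finset.sum_congr rfl fun i _ => ?_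
  field_simp
  ring
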